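/- In K(x,y): (i) if f is a K-linear combination of the monomials y, x·y, x²·y, x·(x·y) and ∂_x(f) = ∂_y(f) = 0, then f = 0 (there is no train Peirce-evanescent identity of degree (2,1)); (ii) for every n ≥ 3 and every commutative nonassociative monomial w of bidegree (n,1) in (x,y) with w ≠ x^n·y and w ≠ x^{{n}}y, there exists a unique element P_w of the K-linear span of {x^k·y : 2 ≤ k ≤ n} ∪ {x^{{r}}y : 1 ≤ r ≤ n} such that ε(P_w) = 1 and ∂_x(w − P_w) = ∂_y(w − P_w) = 0; consequently w − P_w is a Peirce-evanescent identity. -/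

import Mathlib

namespace Evanescent

universe u v

variable {T : Type u}

/-- The commutativity relation on the free magma on `T`. -/
inductive CommRel (T : Type u) : FreeMagma T → FreeMagma T → Prop
  | comm (a b : FreeMagma T) : CommRel T (a * b) (b * a)
  | mul_left {a b : FreeMagma T} (c : FreeMagma T) :
      CommRel T a b → CommRel T (a * c) (b * c)
  | mul_right (c : FreeMagma T) {a b : FreeMagma T} :
      CommRel T a b → CommRel T (c * a) (c * b)

/-- The free commutative magma on `T`: the set of commutative nonassociative
monomials (words) in the variables `T`. -/
def FreeCommMagma (T : Type u) : Type u := Quot (CommRel T)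

namespace FreeCommMagma

instance : Mul (FreeCommMagma T) :=
  ⟨Quot.map₂ (· * ·) (fun a _ _ h => CommRel.mul_right a h)
    (fun _ _ b h => CommRel.mul_left b h)⟩

/-- The class of a nonassociative word in the free commutative magma. -/
def mk (w : FreeMagma T) : FreeCommMagma T := Quot.mk (CommRel T) w

/-- The generator of the free commutative magma corresponding to a variable. -/
def of (t : T) : FreeCommMagma T := mk (FreeMagma.of t)

@[simp] lemma mk_mul (a b : FreeMagma T) : mk a * mk b = mk (a * b) := rfl

protected lemma mul_comm (a b : FreeCommMagma T) : a * b = b * a := by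
  induction a using Quot.ind
  induction b using Quot.ind
  exact Quot.sound (CommRel.comm _ _)

instance : CommMagma (FreeCommMagma T) := ⟨FreeCommMagma.mul_comm⟩

end FreeCommMagma

section Peirce

variable (R : Type v) [Semiring R] [DecidableEq T]

/-- The Peirce polynomial of a (noncommutative) nonassociative word, with
coefficients in `R`. -/
noncomputable def peirceAux (i : T) : FreeMagma T → Polynomial R
  | .of j => if j = i then 1 else 0
  | .mul u v => Polynomial.X * (peirceAux i u + peirceAux i v)

@[simp] lemma peirceAux_mul (i : T) (u v : FreeMagma T) :
    peirceAux R i (u * v) = Polynomial.X * (peirceAux R i u + peirceAux R i v) := rfl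

@[simp] lemma peirceAux_of (i j : T) :
    peirceAux R i (FreeMagma.of j) = if j = i then 1 else 0 := rfl

/-- The number of occurrences of the variable `i` in a nonassociative word. -/
def countAux (i : T) : FreeMagma T → ℕ
  | .of j => if j = i then 1 else 0
  | .mul u v => countAux i u + countAux i v

@[simp] lemma countAux_mul (i : T) (u v : FreeMagma T) :
    countAux i (u * v) = countAux i u + countAux i v := rfl

lemma peirceAux_respects (i : T) {a b : FreeMagma T} (h : CommRel T a b) :
    peirceAux R i a = peirceAux R i b := by
  induction h with
  | comm a b => simp [add_comm]
  | mul_left c h ih => simp [ih]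
  | mul_right c h ih => simp [ih]

lemma countAux_respects (i : T) {a b : FreeMagma T} (h : CommRel T a b) :
    countAux i a = countAux i b := by
  induction h with
  | comm a b => simp [Nat.add_comm]
  | mul_left c h ih => simp [ih]
  | mul_right c h ih => simp [ih]

/-- The Peirce polynomial `∂ᵢ(w)` of a commutative nonassociative monomial `w`,
determined by `∂ᵢ(tᵢ) = 1`, `∂ᵢ(tⱼ) = 0` for `j ≠ i`, and
`∂ᵢ(u·v) = X·(∂ᵢ(u) + ∂ᵢ(v))`. -/
noncomputable def FreeCommMagma.peirce (i : T) : FreeCommMagma T → Polynomial R :=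
  Quot.lift (peirceAux R i) fun _ _ h => peirceAux_respects R i h

/-- The number of occurrences (degree) of the variable `i` in a commutative
nonassociative monomial. -/
def FreeCommMagma.count (i : T) : FreeCommMagma T → ℕ :=
  Quot.lift (countAux i) fun _ _ h => countAux_respects i h

end Peirce

/-- Principal powers of an element of a magma: `ppow a n = a^(n+1)`,
i.e. `ppow a 0 = a` and `ppow a (n+1) = a * (ppow a n)`. -/
def ppow {M : Type v} [Mul M] (a : M) : ℕ → M
  | 0 => a
  | n + 1 => a * ppow a n

/-- Iterated left multiplication: `lpow a r g = a^{{r}} g`, i.e. `lpow a 0 g = g` and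
`lpow a (r+1) g = a * (lpow a r g)`. -/
def lpow {M : Type v} [Mul M] (a : M) : ℕ → M → M
  | 0, g => g
  | r + 1, g => a * lpow a r g

section Algebra

variable (K : Type v) [Field K]

/-- A commutative nonassociative monomial, viewed as an element of the free
commutative nonassociative algebra `K(T)` (realized as the magma algebra of the
free commutative magma). -/
noncomputable def mono (w : FreeCommMagma T) : MonoidAlgebra K (FreeCommMagma T) :=
  MonoidAlgebra.single w 1

/-- The augmentation (sum of the coefficients) of an element of the free
commutative nonassociative algebra. -/
noncomputable def aug : MonoidAlgebra K (FreeCommMagma T) →ₗ[K] K :=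
  Finsupp.lsum K (fun _ => LinearMap.id) ∘ₗ (MonoidAlgebra.coeffLinearEquiv K).toLinearMap

/-- The Peirce polynomial `∂ᵢ : K(T) → K[X]`, the `K`-linear map determined on
monomials by `∂ᵢ(tᵢ) = 1`, `∂ᵢ(tⱼ) = 0` for `j ≠ i`, and `∂ᵢ(u·v) = X·(∂ᵢ(u) + ∂ᵢ(v))`. -/
noncomputable def Dp [DecidableEq T] (i : T) :
    MonoidAlgebra K (FreeCommMagma T) →ₗ[K] Polynomial K :=
  Finsupp.lsum K (fun w => LinearMap.toSpanSingleton K (Polynomial K)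
    (FreeCommMagma.peirce K i w)) ∘ₗ (MonoidAlgebra.coeffLinearEquiv K).toLinearMap

/-- The free commutative nonassociative algebra is commutative. -/
lemma fca_mul_comm (f g : MonoidAlgebra K (FreeCommMagma T)) : f * g = g * f := by
  rw [MonoidAlgebra.mul_def, MonoidAlgebra.mul_def, Finsupp.sum_comm]
  refine Finsupp.sum_congr fun a _ => Finsupp.sum_congr fun c _ => ?_
  rw [FreeCommMagma.mul_comm, mul_comm (f.coeff c) (g.coeff a)]

end Algebra

section Subst

variable (K : Type v) [Field K] {A : Type*} [Mul A]

/-- Evaluation of a nonassociative word under a substitution of the variables. -/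
def evalAux (ρ : T → A) : FreeMagma T → A
  | .of t => ρ t
  | .mul u v => evalAux ρ u * evalAux ρ v

@[simp] lemma evalAux_mul (ρ : T → A) (u v : FreeMagma T) :
    evalAux ρ (u * v) = evalAux ρ u * evalAux ρ v := rfl

/-- Evaluation of a commutative nonassociative monomial in a commutative magma
under a substitution of the variables. -/
def FreeCommMagma.eval (hA : ∀ a b : A, a * b = b * a) (ρ : T → A) :
    FreeCommMagma T → A :=
  Quot.lift (evalAux ρ) (by
    intro a b h
    induction h with
    | comm a b => exact hA _ _
    | mul_left c h ih => simp [ih]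
    | mul_right c h ih => simp [ih])

/-- The substitution homomorphism `ρ̂ : K(T) → A` extending a substitution
`ρ : T → A` of the variables, for `A` a commutative nonassociative `K`-algebra. -/
noncomputable def subst [AddCommMonoid A] [Module K A]
    (hA : ∀ a b : A, a * b = b * a) (ρ : T → A)
    (f : MonoidAlgebra K (FreeCommMagma T)) : A :=
  f.coeff.sum fun w c => c • FreeCommMagma.eval hA ρ w

end Subst

/-- The list of the leaves of a nonassociative word (a rooted binary tree with
leaves labeled by the variables), together with their heights. -/
def leaves : FreeMagma T → List (T × ℕ)
  | .of t => [(t, 0)]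
  | .mul u v => (leaves u ++ leaves v).map fun p => (p.1, p.2 + 1)

end Evanescent
namespace Evanescent

/-- The variable `x` of `K(x,y)`. -/
def x2 : FreeCommMagma (Fin 2) := FreeCommMagma.of 0

/-- The variable `y` of `K(x,y)`. -/
def y2 : FreeCommMagma (Fin 2) := FreeCommMagma.of 1

/-- The span of `{x^k·y : 2 ≤ k ≤ n} ∪ {x^{{r}}y : 1 ≤ r ≤ n}` in `K(x,y)`
(`ppow x2 k = x^(k+1)`, `lpow x2 r y2 = x^{{r}}y`). -/
noncomputable def trainSpan1 (K : Type*) [Field K] (n : ℕ) :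
    Submodule K (MonoidAlgebra K (FreeCommMagma (Fin 2))) :=
  Submodule.span K
    (((fun k => mono K (ppow x2 k * y2)) '' Set.Icc 1 (n - 1)) ∪
     ((fun r => mono K (lpow x2 r y2)) '' Set.Icc 1 n))

end Evanescent

namespace Evanescent

open Polynomial FreeCommMagma

variable {K : Type*} [Field K]

/-- `Aj j = x^(j+1) · y`. -/
def Aj (j : ℕ) : FreeCommMagma (Fin 2) := ppow x2 j * y2

/-- `Lr r = x^{{r}} y`. -/
def Lr (r : ℕ) : FreeCommMagma (Fin 2) := lpow x2 r y2

lemma peirce_mk (i : Fin 2) (a : FreeMagma (Fin 2)) :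
    peirce K i (mk a) = peirceAux K i a := rfl

lemma peirce_mul (i : Fin 2) (u v : FreeCommMagma (Fin 2)) :
    peirce K i (u * v) = X * (peirce K i u + peirce K i v) := by
  induction u using Quot.ind
  induction v using Quot.ind
  rfl

lemma peirce_x2 (i : Fin 2) : peirce K i x2 = if i = 0 then 1 else 0 := by
  show peirceAux K i (.of 0) = _
  rw [peirceAux_of]
  simp [eq_comm]

lemma peirce_y2 (i : Fin 2) : peirce K i y2 = if i = 1 then 1 else 0 := by
  show peirceAux K i (.of 1) = _
  rw [peirceAux_of]
  simp [eq_comm]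

@[simp] lemma peirce_x2_0 : peirce K (0 : Fin 2) x2 = 1 := by simp [peirce_x2]
@[simp] lemma peirce_x2_1 : peirce K (1 : Fin 2) x2 = 0 := by simp [peirce_x2]
@[simp] lemma peirce_y2_0 : peirce K (0 : Fin 2) y2 = 0 := by simp [peirce_y2]
@[simp] lemma peirce_y2_1 : peirce K (1 : Fin 2) y2 = 1 := by simp [peirce_y2]

lemma count_mk (i : Fin 2) (a : FreeMagma (Fin 2)) : count i (mk a) = countAux i a := rfl

lemma count_mul (i : Fin 2) (u v : FreeCommMagma (Fin 2)) :
    count i (u * v) = count i u + count i v := by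
  induction u using Quot.ind
  induction v using Quot.ind
  rfl

@[simp] lemma count_x2_0 : count (0 : Fin 2) x2 = 1 := rfl
@[simp] lemma count_x2_1 : count (1 : Fin 2) x2 = 0 := rfl
@[simp] lemma count_y2_0 : count (0 : Fin 2) y2 = 0 := rfl
@[simp] lemma count_y2_1 : count (1 : Fin 2) y2 = 1 := rfl

lemma aug_single (w : FreeCommMagma (Fin 2)) (c : K) :
    aug K (MonoidAlgebra.single w c) = c := by
  classical
  rw [aug, LinearMap.comp_apply, LinearEquiv.coe_coe, MonoidAlgebra.coeffLinearEquiv_apply,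
    MonoidAlgebra.coeff_single]
  exact Finsupp.lsum_single _ _ _ _

@[simp] lemma aug_mono (w : FreeCommMagma (Fin 2)) : aug K (mono K w) = 1 :=
  aug_single w 1

lemma Dp_single (i : Fin 2) (w : FreeCommMagma (Fin 2)) (c : K) :
    Dp K i (MonoidAlgebra.single w c) = c • peirce K i w := by
  classical
  rw [Dp, LinearMap.comp_apply, LinearEquiv.coe_coe, MonoidAlgebra.coeffLinearEquiv_apply,
    MonoidAlgebra.coeff_single]
  exact Finsupp.lsum_single _ _ _ _

@[simp] lemma Dp_mono (i : Fin 2) (w : FreeCommMagma (Fin 2)) :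
    Dp K i (mono K w) = peirce K i w := by
  rw [mono, Dp_single, one_smul]

lemma mono_mul_mono (u v : FreeCommMagma (Fin 2)) :
    mono K u * mono K v = mono K (u * v) := by
  rw [mono, mono, mono, MonoidAlgebra.single_mul_single, one_mul]

lemma ppow_succ {M : Type*} [Mul M] (a : M) (j : ℕ) : ppow a (j + 1) = a * ppow a j := rfl

lemma lpow_succ {M : Type*} [Mul M] (a g : M) (r : ℕ) : lpow a (r + 1) g = a * lpow a r g := rfl

lemma peirce1_ppow (j : ℕ) : peirce K (1 : Fin 2) (ppow x2 j) = 0 := by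
  induction j with
  | zero => simp [ppow]
  | succ j ih => rw [ppow_succ, peirce_mul, ih]; simp

lemma peirce0_ppow_coeff (j d : ℕ) :
    (peirce K (0 : Fin 2) (ppow x2 j)).coeff d =
      (if d = j then 1 else 0) + (if 1 ≤ d ∧ d ≤ j then 1 else 0) := by
  induction j generalizing d with
  | zero =>
    show ((1 : Polynomial K)).coeff d = _
    rw [Polynomial.coeff_one]
    split_ifs <;> simp_all <;> omega
  | succ j ih =>
    rw [ppow_succ, peirce_mul, peirce_x2_0]
    cases d with
    | zero =>
      rw [Polynomial.mul_coeff_zero, Polynomial.coeff_X_zero, zero_mul]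
      split_ifs <;> simp_all
    | succ d =>
      rw [Polynomial.coeff_X_mul, Polynomial.coeff_add, Polynomial.coeff_one, ih]
      split_ifs <;> simp_all <;> omega

lemma peirce1_lpow (r : ℕ) : peirce K (1 : Fin 2) (Lr r) = X ^ r := by
  induction r with
  | zero => simp [Lr, lpow]
  | succ r ih => rw [Lr, lpow_succ, peirce_mul, ← Lr, ih, peirce_x2_1]; ring

lemma peirce0_lpow_coeff (r d : ℕ) :
    (peirce K (0 : Fin 2) (Lr r)).coeff d = if 1 ≤ d ∧ d ≤ r then 1 else 0 := by
  induction r generalizing d with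
  | zero =>
    show ((0 : Polynomial K)).coeff d = _
    rw [Polynomial.coeff_zero]
    split_ifs <;> simp_all <;> omega
  | succ r ih =>
    rw [Lr, lpow_succ, peirce_mul, ← Lr, peirce_x2_0]
    cases d with
    | zero =>
      rw [Polynomial.mul_coeff_zero, Polynomial.coeff_X_zero, zero_mul]
      split_ifs <;> simp_all
    | succ d =>
      rw [Polynomial.coeff_X_mul, Polynomial.coeff_add, Polynomial.coeff_one, ih]
      split_ifs <;> simp_all <;> omega

lemma count0_ppow (j : ℕ) : count (0 : Fin 2) (ppow x2 j) = j + 1 := by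
  induction j with
  | zero => rfl
  | succ j ih => rw [ppow_succ, count_mul, ih, count_x2_0]; omega

lemma count1_ppow (j : ℕ) : count (1 : Fin 2) (ppow x2 j) = 0 := by
  induction j with
  | zero => rfl
  | succ j ih => rw [ppow_succ, count_mul, ih, count_x2_1]

@[simp] lemma count0_Aj (j : ℕ) : count (0 : Fin 2) (Aj j) = j + 1 := by
  rw [Aj, count_mul, count0_ppow, count_y2_0]

@[simp] lemma count1_Aj (j : ℕ) : count (1 : Fin 2) (Aj j) = 1 := by
  rw [Aj, count_mul, count1_ppow, count_y2_1]

@[simp] lemma count0_Lr (r : ℕ) : count (0 : Fin 2) (Lr r) = r := by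
  induction r with
  | zero => rfl
  | succ r ih => rw [Lr, lpow_succ, count_mul, ← Lr, ih, count_x2_0]; omega

@[simp] lemma count1_Lr (r : ℕ) : count (1 : Fin 2) (Lr r) = 1 := by
  induction r with
  | zero => rfl
  | succ r ih => rw [Lr, lpow_succ, count_mul, ← Lr, ih, count_x2_1]

lemma Aj_inj {j j' : ℕ} (h : Aj j = Aj j') : j = j' := by
  have := congrArg (count (0 : Fin 2)) h
  simpa using this

lemma Lr_inj {r r' : ℕ} (h : Lr r = Lr r') : r = r' := by
  have := congrArg (count (0 : Fin 2)) h
  simpa using this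

lemma peirce1_Aj (j : ℕ) : peirce K (1 : Fin 2) (Aj j) = X := by
  rw [Aj, peirce_mul, peirce1_ppow, peirce_y2_1]; ring

lemma peirce0_Aj_coeff (j d : ℕ) :
    (peirce K (0 : Fin 2) (Aj j)).coeff (d + 1) =
      (if d = j then 1 else 0) + (if 1 ≤ d ∧ d ≤ j then 1 else 0) := by
  rw [Aj, peirce_mul, peirce_y2_0, add_zero, Polynomial.coeff_X_mul, peirce0_ppow_coeff]

lemma peirce0_Aj_coeff_zero (j : ℕ) :
    (peirce K (0 : Fin 2) (Aj j)).coeff 0 = 0 := by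
  rw [Aj, peirce_mul, Polynomial.mul_coeff_zero, Polynomial.coeff_X_zero, zero_mul]

lemma Aj_ne_Lr {j r : ℕ} (hr : 2 ≤ r) : Aj j ≠ Lr r := by
  intro h
  have h1 := congrArg (peirce ℚ (1 : Fin 2)) h
  rw [peirce1_Aj, peirce1_lpow] at h1
  have := congrArg (fun p => Polynomial.coeff p 1) h1
  simp only [Polynomial.coeff_X_one, Polynomial.coeff_X_pow] at this
  rw [if_neg (by omega)] at this
  exact one_ne_zero this

lemma Aj_zero_eq_Lr_one : Aj 0 = Lr 1 := rfl

lemma countAux_of (i j : Fin 2) :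
    countAux i (FreeMagma.of j) = if j = i then 1 else 0 := rfl

lemma countAux_pos (a : FreeMagma (Fin 2)) :
    1 ≤ countAux (0 : Fin 2) a + countAux (1 : Fin 2) a := by
  induction a using FreeMagma.recOnMul with
  | ih1 t => fin_cases t <;> simp [countAux_of]
  | ih2 u v ihu ihv => rw [countAux_mul, countAux_mul]; omega

lemma eq_of_one (a : FreeMagma (Fin 2)) (h0 : countAux (0 : Fin 2) a = 0)
    (h1 : countAux (1 : Fin 2) a = 1) : a = FreeMagma.of 1 := by
  induction a using FreeMagma.recOnMul with
  | ih1 t => fin_cases t <;> simp_all [countAux_of]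
  | ih2 u v ihu ihv =>
    exfalso
    have hu := countAux_pos u
    have hv := countAux_pos v
    rw [countAux_mul] at h0 h1
    omega

lemma aug_mono_mul (v : FreeCommMagma (Fin 2)) (f : MonoidAlgebra K (FreeCommMagma (Fin 2))) :
    aug K (mono K v * f) = aug K f := by
  induction f using MonoidAlgebra.induction_linear with
  | zero => rw [mul_zero]
  | add f g ihf ihg => rw [mul_add, map_add, map_add, ihf, ihg]
  | single M c =>
    show aug K (mono K v * MonoidAlgebra.single M c) = _
    rw [mono, MonoidAlgebra.single_mul_single, one_mul, aug_single, aug_single]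

lemma aug_mul_mono (v : FreeCommMagma (Fin 2)) (f : MonoidAlgebra K (FreeCommMagma (Fin 2))) :
    aug K (f * mono K v) = aug K f := by
  rw [fca_mul_comm, aug_mono_mul]

lemma Dp_mono_mul (i : Fin 2) (v : FreeCommMagma (Fin 2))
    (f : MonoidAlgebra K (FreeCommMagma (Fin 2))) :
    Dp K i (mono K v * f) = X * ((aug K f) • peirce K i v + Dp K i f) := by
  induction f using MonoidAlgebra.induction_linear with
  | zero => rw [mul_zero]; simp
  | add f g ihf ihg =>
    rw [mul_add, map_add, map_add, map_add, ihf, ihg, add_smul]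
    ring
  | single M c =>
    show Dp K i (mono K v * MonoidAlgebra.single M c) = _
    rw [mono, MonoidAlgebra.single_mul_single, one_mul, Dp_single, Dp_single,
      aug_single, peirce_mul, Polynomial.smul_eq_C_mul, Polynomial.smul_eq_C_mul,
      Polynomial.smul_eq_C_mul]
    ring

lemma Dp_mul_mono (i : Fin 2) (v : FreeCommMagma (Fin 2))
    (f : MonoidAlgebra K (FreeCommMagma (Fin 2))) :
    Dp K i (f * mono K v) = X * ((aug K f) • peirce K i v + Dp K i f) := by
  rw [fca_mul_comm, Dp_mono_mul]

lemma span_map {M : Type*} [AddCommMonoid M] [Module K M] {S S' : Set M}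
    (L : M →ₗ[K] M) (h : ∀ s ∈ S, L s ∈ Submodule.span K S') {f : M}
    (hf : f ∈ Submodule.span K S) : L f ∈ Submodule.span K S' := by
  have : Submodule.span K S ≤ (Submodule.span K S').comap L :=
    Submodule.span_le.2 h
  exact this hf

/-- The left-multiplication by `x` linear map on `K(x,y)`. -/
noncomputable def LX (K : Type*) [Field K] :
    MonoidAlgebra K (FreeCommMagma (Fin 2)) →ₗ[K] MonoidAlgebra K (FreeCommMagma (Fin 2)) :=
  LinearMap.mulLeft K (mono K x2)

lemma LX_apply (f : MonoidAlgebra K (FreeCommMagma (Fin 2))) : LX K f = mono K x2 * f := rfl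

/-- Every pure-`x` monomial has the Peirce data of a normalized linear combination
of principal powers of `x`. -/
lemma pure_rep (a : FreeMagma (Fin 2)) (h1 : countAux (1 : Fin 2) a = 0) :
    ∃ Q ∈ Submodule.span K ((fun j => mono K (ppow x2 j)) '' Set.Iio (countAux (0 : Fin 2) a)),
      aug K Q = 1 ∧ ∀ i : Fin 2, Dp K i Q = peirce K i (mk a) := by
  induction a using FreeMagma.recOnMul with
  | ih1 t =>
    have ht : t = 0 := by fin_cases t <;> simp_all [countAux_of]
    subst ht
    refine ⟨mono K x2, Submodule.subset_span ⟨0, by simp [countAux_of], rfl⟩, by simp, ?_⟩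
    intro i
    rw [Dp_mono]
    rfl
  | ih2 s t ihs iht =>
    rw [countAux_mul] at h1
    have hs1 : countAux (1 : Fin 2) s = 0 := by omega
    have ht1 : countAux (1 : Fin 2) t = 0 := by omega
    obtain ⟨Qs, hQsmem, hQsaug, hQsDp⟩ := ihs hs1
    obtain ⟨Qt, hQtmem, hQtaug, hQtDp⟩ := iht ht1
    have hspos := countAux_pos s
    have htpos := countAux_pos t
    set cs := countAux (0 : Fin 2) s with hcs
    set ct := countAux (0 : Fin 2) t with hct
    have hc : countAux (0 : Fin 2) (s * t) = cs + ct := countAux_mul 0 s t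
    refine ⟨LX K Qs + LX K Qt - LX K (mono K x2), ?_, ?_, ?_⟩
    · rw [hc]
      have key : ∀ (c : ℕ), c ≤ cs + ct - 1 → ∀ Q, Q ∈ Submodule.span K
          ((fun j => mono K (ppow x2 j)) '' Set.Iio c) → LX K Q ∈ Submodule.span K
          ((fun j => mono K (ppow x2 j)) '' Set.Iio (cs + ct)) := by
        intro c hcle Q hQ
        refine span_map (LX K) ?_ hQ
        rintro s ⟨j, hj, rfl⟩
        rw [LX_apply, mono_mul_mono]
        exact Submodule.subset_span ⟨j + 1, by simp only [Set.mem_Iio] at hj ⊢; omega, rfl⟩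
      refine Submodule.sub_mem _ (Submodule.add_mem _ ?_ ?_) ?_
      · exact key cs (by omega) Qs hQsmem
      · exact key ct (by omega) Qt hQtmem
      · rw [LX_apply, mono_mul_mono]
        exact Submodule.subset_span ⟨1, by simp only [Set.mem_Iio]; omega, rfl⟩
    · rw [map_sub, map_add, LX_apply, LX_apply, LX_apply, aug_mono_mul, aug_mono_mul,
        aug_mono_mul, hQsaug, hQtaug, aug_mono]
      ring
    · intro i
      rw [← mk_mul, peirce_mul, map_sub, map_add, LX_apply, LX_apply, LX_apply,
        Dp_mono_mul, Dp_mono_mul, Dp_mono_mul, hQsaug, hQtaug, aug_mono, hQsDp i, hQtDp i,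
        Dp_mono]
      simp only [one_smul]
      ring

@[simp] lemma ppow_zero {M : Type*} [Mul M] (a : M) : ppow a 0 = a := rfl
@[simp] lemma lpow_zero {M : Type*} [Mul M] (a g : M) : lpow a 0 g = g := rfl

lemma peirce_Aj (i : Fin 2) (k : ℕ) :
    peirce K i (Aj k) = X * (peirce K i (ppow x2 k) + peirce K i y2) := by
  rw [Aj, peirce_mul]

lemma peirce_Aj_succ (i : Fin 2) (k : ℕ) :
    peirce K i (Aj (k + 1)) =
      X * (X * (peirce K i x2 + peirce K i (ppow x2 k)) + peirce K i y2) := by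
  rw [Aj, peirce_mul, ppow_succ, peirce_mul]

lemma peirce_Aj_one (i : Fin 2) :
    peirce K i (Aj 1) = X * (X * (peirce K i x2 + peirce K i x2) + peirce K i y2) := by
  have h : (1 : ℕ) = 0 + 1 := rfl
  rw [h, peirce_Aj_succ, ppow_zero]

lemma peirce_Lr_succ (i : Fin 2) (r : ℕ) :
    peirce K i (Lr (r + 1)) = X * (peirce K i x2 + peirce K i (Lr r)) := by
  rw [Lr, lpow_succ, peirce_mul, ← Lr]

lemma peirce_Lr_zero (i : Fin 2) : peirce K i (Lr 0) = peirce K i y2 := rfl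

lemma peirce_Lr_two (i : Fin 2) :
    peirce K i (Lr 2) = X * (peirce K i x2 + X * (peirce K i x2 + peirce K i y2)) := by
  have h : Lr 2 = Lr (1 + 1) := rfl
  rw [h, peirce_Lr_succ]
  have h1 : Lr 1 = Lr (0 + 1) := rfl
  rw [h1, peirce_Lr_succ, peirce_Lr_zero]

open Classical in
/-- The "corrected left multiplication by `x`" on the train monomials. -/
noncomputable def sh (K : Type*) [Field K] (M : FreeCommMagma (Fin 2)) :
    MonoidAlgebra K (FreeCommMagma (Fin 2)) :=
  if h : ∃ j, M = Aj j then
    mono K (Aj (h.choose + 1)) - mono K (Aj 1) + mono K (Lr 2)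
  else if h' : ∃ r, M = Lr r then mono K (Lr (h'.choose + 1)) else 0

lemma sh_Aj (j : ℕ) :
    sh K (Aj j) = mono K (Aj (j + 1)) - mono K (Aj 1) + mono K (Lr 2) := by
  have h : ∃ j', Aj j = Aj j' := ⟨j, rfl⟩
  rw [sh, dif_pos h]
  have hc : h.choose = j := (Aj_inj h.choose_spec).symm
  rw [hc]

lemma sh_Lr {r : ℕ} (hr : 1 ≤ r) : sh K (Lr r) = mono K (Lr (r + 1)) := by
  rcases eq_or_lt_of_le hr with h1 | h2
  · rw [← h1, ← Aj_zero_eq_Lr_one, sh_Aj]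
    have : Aj (0 + 1) = Aj 1 := rfl
    rw [this, sub_self, zero_add]
  · have hno : ¬∃ j, Lr r = Aj j := by
      rintro ⟨j, hj⟩
      exact Aj_ne_Lr h2 hj.symm
    have h : ∃ r', Lr r = Lr r' := ⟨r, rfl⟩
    rw [sh, dif_neg hno, dif_pos h]
    have hc : h.choose = r := (Lr_inj h.choose_spec).symm
    rw [hc]

/-- The linear extension of `sh`. -/
noncomputable def Sh (K : Type*) [Field K] :
    MonoidAlgebra K (FreeCommMagma (Fin 2)) →ₗ[K] MonoidAlgebra K (FreeCommMagma (Fin 2)) :=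
  Finsupp.lsum K (fun M => LinearMap.toSpanSingleton K _ (sh K M)) ∘ₗ
    (MonoidAlgebra.coeffLinearEquiv K).toLinearMap

lemma Sh_single (M : FreeCommMagma (Fin 2)) (c : K) :
    Sh K (MonoidAlgebra.single M c) = c • sh K M := by
  classical
  rw [Sh, LinearMap.comp_apply, LinearEquiv.coe_coe, MonoidAlgebra.coeffLinearEquiv_apply,
    MonoidAlgebra.coeff_single]
  exact Finsupp.lsum_single _ _ _ _

lemma Sh_props {m n : ℕ} (hmn : m + 1 ≤ n) {f : MonoidAlgebra K (FreeCommMagma (Fin 2))}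
    (hf : f ∈ trainSpan1 K m) :
    Sh K f ∈ trainSpan1 K n ∧ aug K (Sh K f) = aug K f ∧
      ∀ i : Fin 2, Dp K i (Sh K f) = X * ((aug K f) • peirce K i x2 + Dp K i f) := by
  induction hf using Submodule.span_induction with
  | mem s hs =>
    have main : ∀ M : FreeCommMagma (Fin 2), s = mono K M →
        sh K M ∈ trainSpan1 K n → aug K (sh K M) = 1 →
        (∀ i : Fin 2, Dp K i (sh K M) = X * (peirce K i x2 + peirce K i M)) →
        Sh K s ∈ trainSpan1 K n ∧ aug K (Sh K s) = aug K s ∧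
          ∀ i : Fin 2, Dp K i (Sh K s) = X * ((aug K s) • peirce K i x2 + Dp K i s) := by
      rintro M rfl hmem haug hdp
      have hshs : Sh K (mono K M) = sh K M := by
        rw [mono, Sh_single, one_smul]
      refine ⟨by rw [hshs]; exact hmem, by rw [hshs, haug, aug_mono], ?_⟩
      intro i
      rw [hshs, hdp i, aug_mono, Dp_mono, one_smul]
    rcases hs with ⟨k, hk, rfl⟩ | ⟨r, hr, rfl⟩
    · simp only [Set.mem_Icc] at hk
      refine main (Aj k) rfl ?_ ?_ ?_
      · rw [sh_Aj]
        refine Submodule.add_mem _ (Submodule.sub_mem _ ?_ ?_) ?_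
        · exact Submodule.subset_span (Or.inl ⟨k + 1, Set.mem_Icc.2 (by omega), rfl⟩)
        · exact Submodule.subset_span (Or.inl ⟨1, Set.mem_Icc.2 (by omega), rfl⟩)
        · exact Submodule.subset_span (Or.inr ⟨2, Set.mem_Icc.2 (by omega), rfl⟩)
      · rw [sh_Aj, map_add, map_sub, aug_mono, aug_mono, aug_mono]
        ring
      · intro i
        rw [sh_Aj, map_add, map_sub, Dp_mono, Dp_mono, Dp_mono, peirce_Aj_succ,
          peirce_Aj_one, peirce_Lr_two, peirce_Aj]
        ring
    · simp only [Set.mem_Icc] at hr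
      refine main (Lr r) rfl ?_ ?_ ?_
      · rw [sh_Lr (by omega)]
        exact Submodule.subset_span (Or.inr ⟨r + 1, Set.mem_Icc.2 (by omega), rfl⟩)
      · rw [sh_Lr (by omega), aug_mono]
      · intro i
        rw [sh_Lr (by omega), Dp_mono, peirce_Lr_succ]
  | zero =>
    refine ⟨by rw [map_zero]; exact Submodule.zero_mem _, by rw [map_zero], ?_⟩
    intro i
    simp
  | add u v hu hv ihu ihv =>
    obtain ⟨m1, a1, d1⟩ := ihu
    obtain ⟨m2, a2, d2⟩ := ihv
    refine ⟨by rw [map_add]; exact Submodule.add_mem _ m1 m2,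
      by rw [map_add, map_add, map_add, a1, a2], ?_⟩
    intro i
    rw [map_add, map_add, map_add, map_add, d1 i, d2 i, add_smul]
    ring
  | smul c u hu ihu =>
    obtain ⟨m1, a1, d1⟩ := ihu
    refine ⟨by rw [map_smul]; exact Submodule.smul_mem _ _ m1,
      by rw [map_smul, map_smul, a1, ← map_smul], ?_⟩
    intro i
    rw [map_smul, map_smul, d1 i, map_smul, map_smul]
    simp only [smul_eq_mul, Polynomial.smul_eq_C_mul, map_mul]
    ring

lemma step (u v : FreeMagma (Fin 2)) (hu1 : countAux (1 : Fin 2) u = 1)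
    (hv1 : countAux (1 : Fin 2) v = 0)
    (IH : 1 ≤ countAux (0 : Fin 2) u → ∃ P ∈ trainSpan1 K (countAux (0 : Fin 2) u),
      aug K P = 1 ∧ ∀ i : Fin 2, Dp K i P = peirce K i (mk u)) :
    ∃ P ∈ trainSpan1 K (countAux (0 : Fin 2) u + countAux (0 : Fin 2) v),
      aug K P = 1 ∧ ∀ i : Fin 2,
        Dp K i P = X * (peirce K i (mk u) + peirce K i (mk v)) := by
  have hvpos := countAux_pos v
  have hc : 1 ≤ countAux (0 : Fin 2) v := by omega
  obtain ⟨Q, hQmem, hQaug, hQDp⟩ := pure_rep (K := K) v hv1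
  set m := countAux (0 : Fin 2) u with hm
  set c := countAux (0 : Fin 2) v with hcv
  set n := m + c with hn
  have hQY_mem : Q * mono K y2 ∈ trainSpan1 K n := by
    refine span_map (K := K)
      (S' := ((fun k => mono K (ppow x2 k * y2)) '' Set.Icc 1 (n - 1)) ∪
        ((fun r => mono K (lpow x2 r y2)) '' Set.Icc 1 n))
      (LinearMap.mulRight K (mono K y2)) ?_ hQmem
    rintro s ⟨j, hj, rfl⟩
    rw [LinearMap.mulRight_apply, mono_mul_mono]
    simp only [Set.mem_Iio] at hj
    rcases Nat.eq_zero_or_pos j with h0 | h1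
    · subst h0
      exact Submodule.subset_span (Or.inr ⟨1, Set.mem_Icc.2 (by omega), rfl⟩)
    · exact Submodule.subset_span (Or.inl ⟨j, Set.mem_Icc.2 (by omega), rfl⟩)
  have hQY_aug : aug K (Q * mono K y2) = 1 := by rw [aug_mul_mono, hQaug]
  have hQY_Dp : ∀ i : Fin 2, Dp K i (Q * mono K y2) =
      X * (peirce K i y2 + peirce K i (mk v)) := by
    intro i
    rw [Dp_mul_mono, hQaug, one_smul, hQDp i]
  by_cases hm0 : m = 0
  · have hu : u = FreeMagma.of 1 := eq_of_one u (by omega) hu1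
    have hpu : ∀ i : Fin 2, peirce K i (mk u) = peirce K i y2 := by
      intro i; rw [hu]; rfl
    refine ⟨Q * mono K y2, hQY_mem, hQY_aug, ?_⟩
    intro i
    rw [hQY_Dp i, hpu i]
  · obtain ⟨Pu, hPmem, hPaug, hPDp⟩ := IH (by omega)
    obtain ⟨hShmem, hShaug, hShDp⟩ := Sh_props (show m + 1 ≤ n by omega) hPmem
    refine ⟨Q * mono K y2 - mono K (Aj 0) + Sh K Pu, ?_, ?_, ?_⟩
    · refine Submodule.add_mem _ (Submodule.sub_mem _ hQY_mem ?_) hShmem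
      exact Submodule.subset_span (Or.inr ⟨1, Set.mem_Icc.2 (by omega), rfl⟩)
    · rw [map_add, map_sub, hQY_aug, hShaug, hPaug, aug_mono]
      ring
    · intro i
      rw [map_add, map_sub, hQY_Dp i, hShDp i, hPaug, one_smul, hPDp i, Dp_mono,
        peirce_Aj, ppow_zero]
      ring

lemma exists_rep (a : FreeMagma (Fin 2)) (h1 : countAux (1 : Fin 2) a = 1)
    (hx : 1 ≤ countAux (0 : Fin 2) a) :
    ∃ P ∈ trainSpan1 K (countAux (0 : Fin 2) a),
      aug K P = 1 ∧ ∀ i : Fin 2, Dp K i P = peirce K i (mk a) := by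
  induction a using FreeMagma.recOnMul with
  | ih1 t => exfalso; fin_cases t <;> simp_all [countAux_of]
  | ih2 s t ihs iht =>
    have hcount : countAux (0 : Fin 2) (s * t) =
        countAux (0 : Fin 2) s + countAux (0 : Fin 2) t := countAux_mul 0 s t
    have hcount1 : countAux (1 : Fin 2) (s * t) =
        countAux (1 : Fin 2) s + countAux (1 : Fin 2) t := countAux_mul 1 s t
    have hpeirce : ∀ i : Fin 2, peirce K i (mk (s * t)) =
        X * (peirce K i (mk s) + peirce K i (mk t)) := by
      intro i
      rw [← mk_mul, peirce_mul]
    by_cases hs : countAux (1 : Fin 2) s = 1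
    · have ht0 : countAux (1 : Fin 2) t = 0 := by omega
      obtain ⟨P, hmem, haug, hDp⟩ := step s t hs ht0 (fun h => ihs hs h)
      refine ⟨P, by rw [hcount]; exact hmem, haug, ?_⟩
      intro i
      rw [hpeirce i, hDp i]
    · have hs0 : countAux (1 : Fin 2) s = 0 := by omega
      have ht1 : countAux (1 : Fin 2) t = 1 := by omega
      obtain ⟨P, hmem, haug, hDp⟩ := step t s ht1 hs0 (fun h => iht ht1 h)
      refine ⟨P, by rw [hcount, add_comm]; exact hmem, haug, ?_⟩
      intro i
      rw [hpeirce i, hDp i, add_comm (peirce K i (mk t))]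

/-- The set of train monomials of degree at most `(n,1)`. -/
def Sset (n : ℕ) : Set (FreeCommMagma (Fin 2)) :=
  ((fun k => ppow x2 k * y2) '' Set.Icc 1 (n - 1)) ∪ ((fun r => lpow x2 r y2) '' Set.Icc 1 n)

lemma trainSpan_supported {n : ℕ} {f : MonoidAlgebra K (FreeCommMagma (Fin 2))}
    (hf : f ∈ trainSpan1 K n) : ∀ M ∉ Sset n, f.coeff M = 0 := by
  have hle : trainSpan1 K n ≤ MonoidAlgebra.supported K K (Sset n) := by
    apply Submodule.span_le.2
    rintro s (⟨k, hk, rfl⟩ | ⟨r, hr, rfl⟩)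
    · exact Submodule.mem_comap.2 (Finsupp.single_mem_supported K 1 (Or.inl ⟨k, hk, rfl⟩))
    · exact Submodule.mem_comap.2 (Finsupp.single_mem_supported K 1 (Or.inr ⟨r, hr, rfl⟩))
  exact MonoidAlgebra.mem_supported'.1 (hle hf)

lemma span_inj {n : ℕ} (hchar : (2 : K) ≠ 0) {D : MonoidAlgebra K (FreeCommMagma (Fin 2))}
    (hD : D ∈ trainSpan1 K n) (hDp : ∀ i : Fin 2, Dp K i D = 0) : D = 0 := by
  classical
  have hsupp := trainSpan_supported hD
  set TA : Finset (FreeCommMagma (Fin 2)) := (Finset.Icc 1 (n - 1)).image Aj with hTA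
  set TL : Finset (FreeCommMagma (Fin 2)) := (Finset.Icc 1 n).image Lr with hTL
  set β : ℕ → K := fun j => D.coeff (Aj j) with hβ
  set γ : ℕ → K := fun r => D.coeff (Lr r) with hγdef
  have hdisj : Disjoint TA TL := by
    rw [Finset.disjoint_left]
    rintro M hMA hML
    obtain ⟨k, hk, rfl⟩ := Finset.mem_image.1 hMA
    obtain ⟨r, hr, hrr⟩ := Finset.mem_image.1 hML
    rw [Finset.mem_Icc] at hk hr
    have hcnt : r = k + 1 := by
      have := congrArg (count (0 : Fin 2)) hrr
      simpa using this
    exact Aj_ne_Lr (by omega) hrr.symm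
  have hsubT : D.coeff.support ⊆ TA ∪ TL := by
    intro M hM
    have hne : D.coeff M ≠ 0 := Finsupp.mem_support_iff.1 hM
    have hMS : M ∈ Sset n := by
      by_contra hc
      exact hne (hsupp M hc)
    rcases hMS with ⟨k, hk, rfl⟩ | ⟨r, hr, rfl⟩
    · exact Finset.mem_union_left _ (Finset.mem_image.2 ⟨k, Finset.mem_Icc.2
        (by simpa [Set.mem_Icc] using hk), rfl⟩)
    · exact Finset.mem_union_right _ (Finset.mem_image.2 ⟨r, Finset.mem_Icc.2
        (by simpa [Set.mem_Icc] using hr), rfl⟩)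
  have hsum : ∀ i : Fin 2,
      (∑ k ∈ Finset.Icc 1 (n - 1), β k • peirce K i (Aj k))
        + ∑ r ∈ Finset.Icc 1 n, γ r • peirce K i (Lr r) = 0 := by
    intro i
    have h1 : Dp K i D = ∑ M ∈ TA ∪ TL, D.coeff M • peirce K i M := by
      rw [Dp, LinearMap.comp_apply, LinearEquiv.coe_coe, MonoidAlgebra.coeffLinearEquiv_apply]
      erw [Finsupp.lsum_apply]
      rw [Finsupp.sum_of_support_subset D.coeff hsubT _ (fun M _ => by simp)]
      rfl
    rw [hDp i] at h1
    rw [Finset.sum_union hdisj] at h1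
    rw [Finset.sum_image (fun a ha b hb hab => Aj_inj hab),
      Finset.sum_image (fun a ha b hb hab => Lr_inj hab)] at h1
    exact h1.symm
  -- the γ coefficients vanish in degrees ≥ 2
  have hγ : ∀ r, 2 ≤ r → r ≤ n → γ r = 0 := by
    intro r hr2 hrn
    have h := congrArg (fun p => Polynomial.coeff p r) (hsum 1)
    simp only [Polynomial.finset_sum_coeff, Polynomial.coeff_add, Polynomial.coeff_smul,
      Polynomial.coeff_zero, peirce1_Aj (K := K), peirce1_lpow (K := K),
      Polynomial.coeff_X, Polynomial.coeff_X_pow, smul_eq_mul] at h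
    rw [Finset.sum_congr rfl (fun k _ => by rw [if_neg (by omega : ¬(1 : ℕ) = r), mul_zero]),
      Finset.sum_const, smul_zero, zero_add] at h
    have h2 : ∀ r' ∈ Finset.Icc 1 n, γ r' * (if r = r' then (1 : K) else 0)
        = if r = r' then γ r' else 0 := by
      intro r' _
      split_ifs <;> simp
    rw [Finset.sum_congr rfl h2, Finset.sum_ite_eq, if_pos (Finset.mem_Icc.2 (by omega))] at h
    exact h
  -- the master equations for the β coefficients
  have hE : ∀ d, 1 ≤ d → d ≤ n - 1 →
      β d + ∑ j ∈ Finset.Icc d (n - 1), β j = 0 := by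
    intro d hd1 hdn
    have h := congrArg (fun p => Polynomial.coeff p (d + 1)) (hsum 0)
    simp only [Polynomial.finset_sum_coeff, Polynomial.coeff_add, Polynomial.coeff_smul,
      Polynomial.coeff_zero, peirce0_Aj_coeff (K := K), peirce0_lpow_coeff (K := K),
      smul_eq_mul] at h
    have hL : ∀ r ∈ Finset.Icc 1 n,
        γ r * (if 1 ≤ d + 1 ∧ d + 1 ≤ r then (1 : K) else 0) = 0 := by
      intro r hr
      rw [Finset.mem_Icc] at hr
      rcases Nat.lt_or_ge r 2 with h2 | h2
      · rw [if_neg (by omega), mul_zero]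
      · rw [hγ r h2 hr.2, zero_mul]
    rw [Finset.sum_congr rfl hL, Finset.sum_const, smul_zero, add_zero] at h
    have hsplit : ∀ k ∈ Finset.Icc 1 (n - 1),
        β k * ((if d = k then (1 : K) else 0) + if 1 ≤ d ∧ d ≤ k then 1 else 0)
        = (if d = k then β k else 0) + if d ≤ k then β k else 0 := by
      intro k _
      split_ifs <;> (try omega) <;> ring
    rw [Finset.sum_congr rfl hsplit, Finset.sum_add_distrib, Finset.sum_ite_eq,
      if_pos (Finset.mem_Icc.2 (by omega)), ← Finset.sum_filter] at h
    have hfil : (Finset.Icc 1 (n - 1)).filter (fun k => d ≤ k) = Finset.Icc d (n - 1) := by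
      ext k
      simp only [Finset.mem_filter, Finset.mem_Icc]
      omega
    rw [hfil] at h
    exact h
  -- the β coefficients vanish outside the support range
  have hβbig : ∀ d, n ≤ d → β d = 0 := by
    intro d hd
    apply hsupp
    rintro (⟨k, hk, hkk⟩ | ⟨r, hr, hrr⟩)
    · have : k = d := Aj_inj hkk
      simp only [Set.mem_Icc] at hk
      omega
    · have hrr' : Lr r = Aj d := hrr
      have : r = d + 1 := by
        have := congrArg (count (0 : Fin 2)) hrr'
        simpa using this
      simp only [Set.mem_Icc] at hr
      omega
  -- downward induction
  have hβ : ∀ t d, 1 ≤ d → n ≤ d + t → β d = 0 := by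
    intro t
    induction t with
    | zero => intro d hd1 hdn; exact hβbig d (by omega)
    | succ t ih =>
      intro d hd1 hdn
      rcases Nat.lt_or_ge (d + t) n with hlt | hge
      · -- d ≤ n - 1 here and d + t + 1 ≥ n
        have hdle : d ≤ n - 1 := by omega
        have hEd := hE d hd1 hdle
        have hdmem : d ∈ Finset.Icc d (n - 1) := Finset.mem_Icc.2 (by omega)
        rw [← Finset.add_sum_erase _ _ hdmem] at hEd
        have hzero : ∑ j ∈ (Finset.Icc d (n - 1)).erase d, β j = 0 := by
          apply Finset.sum_eq_zero
          intro j hj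
          rw [Finset.mem_erase, Finset.mem_Icc] at hj
          exact ih j (by omega) (by omega)
        rw [hzero, add_zero, ← two_mul] at hEd
        rcases mul_eq_zero.1 hEd with h | h
        · exact absurd h hchar
        · exact h
      · exact ih d hd1 hge
  have hβall : ∀ d, 1 ≤ d → β d = 0 := fun d hd => hβ n d hd (by omega)
  -- γ 1 vanishes
  have hγ1 : γ 1 = 0 := by
    have h := congrArg (fun p => Polynomial.coeff p 1) (hsum 0)
    simp only [Polynomial.finset_sum_coeff, Polynomial.coeff_add, Polynomial.coeff_smul,
      Polynomial.coeff_zero, peirce0_lpow_coeff (K := K), smul_eq_mul] at h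
    have hA0 : ∀ k ∈ Finset.Icc 1 (n - 1),
        β k * (peirce K (0 : Fin 2) (Aj k)).coeff 1 = 0 := by
      intro k hk
      rw [Finset.mem_Icc] at hk
      rw [hβall k (by omega), zero_mul]
    rw [Finset.sum_congr rfl hA0, Finset.sum_const, smul_zero, zero_add] at h
    have hL1 : ∀ r ∈ Finset.Icc 1 n,
        γ r * (if 1 ≤ 1 ∧ 1 ≤ r then (1 : K) else 0) = if r = 1 then γ 1 else 0 := by
      intro r hr
      rw [Finset.mem_Icc] at hr
      rcases Nat.lt_or_ge r 2 with h2 | h2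
      · have : r = 1 := by omega
        subst this
        rw [if_pos (by omega), if_pos rfl, mul_one]
      · rw [hγ r h2 hr.2, zero_mul, if_neg (by omega)]
    rw [Finset.sum_congr rfl hL1] at h
    have : ∀ r ∈ Finset.Icc 1 n, (if r = 1 then γ 1 else 0) = if 1 = r then γ 1 else 0 := by
      intro r _
      simp [eq_comm]
    rw [Finset.sum_congr rfl this, Finset.sum_ite_eq] at h
    rcases Nat.eq_zero_or_pos n with h0 | hpos
    · apply hsupp
      rintro (⟨k, hk, hkk⟩ | ⟨r, hr, hrr⟩)
      · simp only [Set.mem_Icc, h0] at hk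
        omega
      · simp only [Set.mem_Icc, h0] at hr
        omega
    · rw [if_pos (Finset.mem_Icc.2 (by omega))] at h
      exact h
  -- conclude
  ext M
  show D.coeff M = 0
  by_cases hMS : M ∈ Sset n
  · rcases hMS with ⟨k, hk, rfl⟩ | ⟨r, hr, rfl⟩
    · simp only [Set.mem_Icc] at hk
      exact hβall k hk.1
    · simp only [Set.mem_Icc] at hr
      rcases Nat.lt_or_ge r 2 with h2 | h2
      · have : r = 1 := by omega
        subst this
        exact hγ1
      · exact hγ r h2 hr.2
  · exact hsupp M hMS

end Evanescent

open Evanescent in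
/-- (i) There is no train Peirce-evanescent identity of degree `(2,1)`;
(ii) for `n ≥ 3` and every monomial `w` of bidegree `(n,1)` other than `xⁿ·y` and
`x^{{n}}y` there is a unique `P_w` in the span of
`{x^k·y : 2 ≤ k ≤ n} ∪ {x^{{r}}y : 1 ≤ r ≤ n}` with `ε(P_w) = 1` and
`∂ₓ(w − P_w) = ∂_y(w − P_w) = 0`; consequently `w − P_w` is a Peirce-evanescent
identity. -/
theorem train_identities_bidegree_n_one
    {K : Type*} [Field K] (hchar : (2 : K) ≠ 0) :
    (∀ a b c d : K,
      (∀ i : Fin 2, Dp K i (a • mono K y2 + b • mono K (x2 * y2)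
        + c • mono K (ppow x2 1 * y2) + d • mono K (lpow x2 2 y2)) = 0) →
      a • mono K y2 + b • mono K (x2 * y2)
        + c • mono K (ppow x2 1 * y2) + d • mono K (lpow x2 2 y2) = 0) ∧
    (∀ n : ℕ, 3 ≤ n → ∀ w : FreeCommMagma (Fin 2),
      FreeCommMagma.count 0 w = n → FreeCommMagma.count 1 w = 1 →
      w ≠ ppow x2 (n - 1) * y2 → w ≠ lpow x2 n y2 →
      (∃! P : MonoidAlgebra K (FreeCommMagma (Fin 2)),
        P ∈ trainSpan1 K n ∧ aug K P = 1 ∧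
        ∀ i : Fin 2, Dp K i (mono K w - P) = 0) ∧
      (∀ P : MonoidAlgebra K (FreeCommMagma (Fin 2)),
        P ∈ trainSpan1 K n → aug K P = 1 →
        (∀ i : Fin 2, Dp K i (mono K w - P) = 0) →
        mono K w - P ≠ 0 ∧ aug K (mono K w - P) = 0)) := by
  constructor
  · -- part (i)
    intro a b c d h
    have key : ∀ i : Fin 2, Dp K i (a • mono K y2 + b • mono K (x2 * y2)
        + c • mono K (ppow x2 1 * y2) + d • mono K (lpow x2 2 y2))
        = a • FreeCommMagma.peirce K i y2 + b • FreeCommMagma.peirce K i (Aj 0) + c • FreeCommMagma.peirce K i (Aj 1)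
          + d • FreeCommMagma.peirce K i (Lr 2) := by
      intro i
      simp only [map_add, map_smul, Dp_mono]
      rfl
    have p10 : FreeCommMagma.peirce K (1 : Fin 2) (Aj 0) = Polynomial.X := by
      rw [peirce_Aj, ppow_zero, peirce_x2_1, peirce_y2_1, zero_add, mul_one]
    have h1 := h 1
    rw [key 1, p10, peirce1_Aj, peirce1_lpow, peirce_y2_1] at h1
    have ha : a = 0 := by
      have hq := congrArg (fun p => Polynomial.coeff p 0) h1
      simp only [Polynomial.coeff_add, Polynomial.coeff_smul, Polynomial.coeff_one,
        Polynomial.coeff_X_zero, Polynomial.coeff_X, Polynomial.coeff_X_pow,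
        Polynomial.coeff_zero, smul_eq_mul] at hq
      norm_num at hq
      exact hq
    have hd : d = 0 := by
      have hq := congrArg (fun p => Polynomial.coeff p 2) h1
      simp only [Polynomial.coeff_add, Polynomial.coeff_smul, Polynomial.coeff_one,
        Polynomial.coeff_X_zero, Polynomial.coeff_X, Polynomial.coeff_X_pow,
        Polynomial.coeff_zero, smul_eq_mul] at hq
      norm_num at hq
      exact hq
    have hbc : b + c = 0 := by
      have hq := congrArg (fun p => Polynomial.coeff p 1) h1
      simp only [Polynomial.coeff_add, Polynomial.coeff_smul, Polynomial.coeff_one,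
        Polynomial.coeff_X_zero, Polynomial.coeff_X, Polynomial.coeff_X_pow,
        Polynomial.coeff_zero, smul_eq_mul] at hq
      norm_num at hq
      exact hq
    have q00 : FreeCommMagma.peirce K (0 : Fin 2) (Aj 0) = Polynomial.X := by
      rw [peirce_Aj, ppow_zero, peirce_x2_0, peirce_y2_0, add_zero, mul_one]
    have c2 : (FreeCommMagma.peirce K (0 : Fin 2) (Aj 1)).coeff 2 = 2 := by
      have hh := peirce0_Aj_coeff (K := K) 1 1
      norm_num at hh
      exact hh
    have cl2 : (FreeCommMagma.peirce K (0 : Fin 2) (Lr 2)).coeff 2 = 1 := by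
      have hh := peirce0_lpow_coeff (K := K) 2 2
      norm_num at hh
      exact hh
    have h0 := h 0
    rw [key 0, peirce_y2_0, q00, smul_zero, zero_add] at h0
    have hc : c = 0 := by
      have hq := congrArg (fun p => Polynomial.coeff p 2) h0
      simp only [Polynomial.coeff_add, Polynomial.coeff_smul, Polynomial.coeff_X,
        Polynomial.coeff_zero, c2, cl2, smul_eq_mul] at hq
      norm_num at hq
      rw [hd, add_zero] at hq
      rcases mul_eq_zero.1 hq with hx | hx
      · exact hx
      · exact absurd hx hchar
    have hb : b = 0 := by
      rw [hc, add_zero] at hbc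
      exact hbc
    rw [ha, hb, hc, hd]
    simp only [zero_smul, add_zero, zero_add]
  · -- part (ii)
    intro n hn w hw0 hw1 hne1 hne2
    obtain ⟨a, rfl⟩ := Quot.exists_rep w
    have hw0' : countAux (0 : Fin 2) a = n := hw0
    have hw1' : countAux (1 : Fin 2) a = 1 := hw1
    obtain ⟨P, hPmem, hPaug, hPDp⟩ := exists_rep (K := K) a hw1' (by omega)
    rw [hw0'] at hPmem
    have hdpP : ∀ i : Fin 2, Dp K i (mono K (Quot.mk (CommRel (Fin 2)) a) - P) = 0 := by
      intro i
      erw [map_sub, Dp_mono, hPDp i]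
      exact sub_eq_zero.2 rfl
    have huniq : ∀ P' : MonoidAlgebra K (FreeCommMagma (Fin 2)),
        P' ∈ trainSpan1 K n →
        (∀ i : Fin 2, Dp K i (mono K (Quot.mk (CommRel (Fin 2)) a) - P') = 0) → P' = P := by
      intro P' hmem' hdp'
      have hi : ∀ i : Fin 2, Dp K i (P' - P) = 0 := by
        intro i
        have ha1 := hdp' i
        have ha2 := hdpP i
        rw [map_sub] at ha1 ha2
        rw [map_sub]
        linear_combination ha2 - ha1
      have := span_inj hchar (Submodule.sub_mem _ hmem' hPmem) hi
      exact sub_eq_zero.1 this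
    constructor
    · exact ⟨P, ⟨hPmem, hPaug, hdpP⟩, fun P' h' => huniq P' h'.1 h'.2.2⟩
    · intro P' hmem' haug' hdp'
      constructor
      · intro h0
        have heq : mono K (Quot.mk (CommRel (Fin 2)) a) = P' := sub_eq_zero.1 h0
        have hco : P'.coeff (Quot.mk (CommRel (Fin 2)) a) = 1 := by
          rw [← heq]
          exact Finsupp.single_eq_same
        have hmemS : (Quot.mk (CommRel (Fin 2)) a : FreeCommMagma (Fin 2)) ∈ Sset n := by
          by_contra hcon
          rw [trainSpan_supported hmem' _ hcon] at hco
          exact zero_ne_one hco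
        rcases hmemS with ⟨k, hk, hkk⟩ | ⟨r, hr, hrr⟩
        · have hAj : Aj k = Quot.mk (CommRel (Fin 2)) a := hkk
          have hkn : k + 1 = n := by
            have := congrArg (FreeCommMagma.count (0 : Fin 2)) hAj
            rw [count0_Aj] at this
            rw [this]
            exact hw0
          have hk1 : k = n - 1 := by omega
          apply hne1
          rw [← hAj, hk1]
          rfl
        · have hLr : Lr r = Quot.mk (CommRel (Fin 2)) a := hrr
          have hrn : r = n := by
            have := congrArg (FreeCommMagma.count (0 : Fin 2)) hLr
            rw [count0_Lr] at this
            rw [this]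
            exact hw0
          apply hne2
          rw [← hLr, hrn]
          rfl
      · erw [map_sub, aug_mono, haug', sub_self]
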